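/- Let A, B be bounded linear operators on G such that M^{A,B} is boundedly invertible. Then the linear subspace {(B*u, A*u) : u ∈ G} is a closed subspace of G ⊕ G. -/

import Mathlib

open ContinuousLinearMap

variable {G : Type*} [NormedAddCommGroup G] [InnerProductSpace ℂ G] [CompleteSpace G]

/-- The operator `M^{A,B}` on `G × G`, `(x₁,x₂) ↦ (A x₁ - B x₂, B x₁ + A x₂)`. -/
noncomputable def MAB (A B : G →L[ℂ] G) : (G × G) →L[ℂ] (G × G) :=
  ((A.comp (fst ℂ G G)) - (B.comp (snd ℂ G G))).prod
    ((B.comp (fst ℂ G G)) + (A.comp (snd ℂ G G)))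

/-- The linear relation `Λ^{A,B} = {(x₁,x₂) : A x₁ = B x₂}`. -/
def LambdaAB (A B : G →L[ℂ] G) : Submodule ℂ (G × G) where
  carrier := {p | A p.1 = B p.2}
  add_mem' := by
    intro a b ha hb
    simp only [Set.mem_setOf_eq] at *
    simp [ha, hb]
  zero_mem' := by simp
  smul_mem' := by
    intro c p hp
    simp only [Set.mem_setOf_eq] at *
    simp [hp]

/-- The adjoint of a linear relation. -/
def relAdjoint (Λ : Submodule ℂ (G × G)) : Submodule ℂ (G × G) where
  carrier := {p | ∀ q ∈ Λ, (inner ℂ p.1 q.2 : ℂ) = inner ℂ p.2 q.1}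
  add_mem' := by
    intro a b ha hb q hq
    simp [inner_add_left, ha q hq, hb q hq]
  zero_mem' := by
    intro q hq; simp
  smul_mem' := by
    intro c p hp q hq
    simp [inner_smul_left, hp q hq]

/-- A linear relation is self-adjoint if it equals its adjoint. -/
def IsSelfAdjointRel (Λ : Submodule ℂ (G × G)) : Prop := relAdjoint Λ = Λ

/-- A bounded operator is boundedly invertible if it has a bounded two-sided inverse. -/
def IsBoundedlyInvertible {E F : Type*} [NormedAddCommGroup E] [NormedSpace ℂ E]
    [NormedAddCommGroup F] [NormedSpace ℂ F] (T : E →L[ℂ] F) : Prop :=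
  ∃ T' : F →L[ℂ] E, (∀ x, T' (T x) = x) ∧ (∀ y, T (T' y) = y)

/-- The pair `(A,B)` is normalized if `A B* = B A*` and `M^{A,B}` is boundedly invertible. -/
noncomputable def IsNormalized (A B : G →L[ℂ] G) : Prop :=
  A ∘L adjoint B = B ∘L adjoint A ∧ IsBoundedlyInvertible (MAB A B)

/-- If `M^{A,B}` is boundedly invertible, then
`{(B*u, A*u) : u ∈ G}` is closed in `G ⊕ G`. -/
theorem isClosed_range_adjoints (A B : G →L[ℂ] G)
    (hM : IsBoundedlyInvertible (MAB A B)) :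
    IsClosed (Set.range (fun u : G => (adjoint B u, adjoint A u))) := by
  obtain ⟨T', h1, h2⟩ := hM
  let e : WithLp 2 (G × G) ≃L[ℂ] G × G := WithLp.prodContinuousLinearEquiv 2 ℂ G G
  let S : WithLp 2 (G × G) →L[ℂ] WithLp 2 (G × G) :=
    (e.symm : (G × G) →L[ℂ] WithLp 2 (G × G)) ∘L (MAB A B) ∘L (e : WithLp 2 (G × G) →L[ℂ] (G × G))
  let S' : WithLp 2 (G × G) →L[ℂ] WithLp 2 (G × G) :=
    (e.symm : (G × G) →L[ℂ] WithLp 2 (G × G)) ∘L T' ∘L (e : WithLp 2 (G × G) →L[ℂ] (G × G))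
  have hSS' : S ∘L S' = ContinuousLinearMap.id ℂ (WithLp 2 (G × G)) := by
    ext x : 1
    simp [S, S', h2]
  have hS'S : S' ∘L S = ContinuousLinearMap.id ℂ (WithLp 2 (G × G)) := by
    ext x : 1
    simp [S, S', h1]
  have ha1 : adjoint S ∘L adjoint S' = ContinuousLinearMap.id ℂ (WithLp 2 (G × G)) := by
    rw [← adjoint_comp, hS'S]; exact adjoint_id
  have ha2 : adjoint S' ∘L adjoint S = ContinuousLinearMap.id ℂ (WithLp 2 (G × G)) := by
    rw [← adjoint_comp, hSS']; exact adjoint_id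
  let eqv : WithLp 2 (G × G) ≃L[ℂ] WithLp 2 (G × G) :=
    ContinuousLinearEquiv.equivOfInverse (adjoint S) (adjoint S')
      (fun x => DFunLike.congr_fun ha2 x) (fun x => DFunLike.congr_fun ha1 x)
  have key : ∀ u : G, adjoint S (e.symm (0, u)) = e.symm (adjoint B u, adjoint A u) := by
    intro u
    apply ext_inner_right ℂ
    intro v
    rw [adjoint_inner_left]
    simp [S, e, MAB, WithLp.prod_inner_apply, inner_add_right, adjoint_inner_left]
  let h : (G × G) ≃ₜ (G × G) := (e.symm.trans (eqv.trans e)).toHomeomorph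
  have hset : Set.range (fun u : G => (adjoint B u, adjoint A u))
      = h '' {p : G × G | p.1 = 0} := by
    ext p
    constructor
    · rintro ⟨u, rfl⟩
      refine ⟨(0, u), rfl, ?_⟩
      show e (eqv (e.symm (0, u))) = _
      show e (adjoint S (e.symm (0, u))) = _
      rw [key u]
      exact e.apply_symm_apply _
    · rintro ⟨⟨x, u⟩, hx, rfl⟩
      simp only [Set.mem_setOf_eq] at hx
      subst hx
      refine ⟨u, ?_⟩
      show _ = e (adjoint S (e.symm (0, u)))
      rw [key u, e.apply_symm_apply]
  rw [hset]
  exact h.isClosedMap _ (isClosed_singleton.preimage continuous_fst)
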